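/- Let a_1 > ... > a_{m+1}, b_1 > ... > b_m, c_1 > ... > c_m, d_1 > ... > d_m be strictly decreasing sequences of natural numbers satisfying a_i > d_i, d_i ≥ a_{i+1}, c_i ≥ b_i, b_i > c_{i+1} for all applicable i, and additionally a_i ≥ b_i and b_i ≥ a_{i+1}, and c_i ≥ d_i and d_i ≥ c_{i+1}. Fix k with 2 ≤ k ≤ m and assume b_{k-1} > a_k. Define a' of length m by a'_i = a_i − 1 for i < k and a'_i = d_i for k ≤ i ≤ m, and b' of length m−1 by b'_i = b_i − 1 for i < k and b'_i = c_{i+1} for k ≤ i ≤ m−1. Then a' and b' are strictly decreasing, a'_i ≥ b'_i for 1 ≤ i ≤ m−1, and b'_i ≥ a'_{i+1} for 1 ≤ i ≤ m−1. -/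
import Mathlib


theorem stmt_8 (m k : ℕ) (hm : 1 ≤ m) (a b c d a' b' : ℕ → ℕ)
    (ha : ∀ i, 1 ≤ i → i ≤ m → a i > a (i + 1))
    (hb : ∀ i, 1 ≤ i → i ≤ m - 1 → b i > b (i + 1))
    (hc : ∀ i, 1 ≤ i → i ≤ m - 1 → c i > c (i + 1))
    (hd : ∀ i, 1 ≤ i → i ≤ m - 1 → d i > d (i + 1))
    (had : ∀ i, 1 ≤ i → i ≤ m → a i > d i)
    (hda : ∀ i, 1 ≤ i → i ≤ m → d i ≥ a (i + 1))
    (hcb : ∀ i, 1 ≤ i → i ≤ m → c i ≥ b i)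
    (hbc : ∀ i, 1 ≤ i → i ≤ m - 1 → b i > c (i + 1))
    (hab : ∀ i, 1 ≤ i → i ≤ m → a i ≥ b i)
    (hba : ∀ i, 1 ≤ i → i ≤ m → b i ≥ a (i + 1))
    (hcd : ∀ i, 1 ≤ i → i ≤ m → c i ≥ d i)
    (hdc : ∀ i, 1 ≤ i → i ≤ m - 1 → d i ≥ c (i + 1))
    (hk1 : 2 ≤ k) (hk2 : k ≤ m) (hbka : b (k - 1) > a k)
    (ha' : ∀ i, 1 ≤ i → i ≤ m → a' i = if i < k then a i - 1 else d i)
    (hb' : ∀ i, 1 ≤ i → i ≤ m - 1 → b' i = if i < k then b i - 1 else c (i + 1)) :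
    (∀ i, 1 ≤ i → i ≤ m - 1 → a' i > a' (i + 1)) ∧
    (∀ i, 1 ≤ i → i ≤ m - 2 → b' i > b' (i + 1)) ∧
    (∀ i, 1 ≤ i → i ≤ m - 1 → a' i ≥ b' i) ∧
    (∀ i, 1 ≤ i → i ≤ m - 1 → b' i ≥ a' (i + 1)) := by
  refine ⟨?_, ?_, ?_, ?_⟩
  · intro i h1 h2
    rw [ha' i h1 (by omega), ha' (i + 1) (by omega) (by omega)]
    have := ha i h1 (by omega)
    have := hd i h1 h2
    have := had i h1 (by omega)
    split_ifs <;> omega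
  · intro i h1 h2
    rw [hb' i h1 (by omega), hb' (i + 1) (by omega) (by omega)]
    have := hb i h1 (by omega)
    have := hbc i h1 (by omega)
    have := hc (i + 1) (by omega) (by omega)
    split_ifs <;> omega
  · intro i h1 h2
    rw [ha' i h1 (by omega), hb' i h1 h2]
    have := hab i h1 (by omega)
    have := hdc i h1 h2
    split_ifs <;> omega
  · intro i h1 h2
    rw [hb' i h1 h2, ha' (i + 1) (by omega) (by omega)]
    have := hba i h1 (by omega)
    have := hcd (i + 1) (by omega) (by omega)
    have := had (i + 1) (by omega) (by omega)
    by_cases hik : k = i + 1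
    · have hb1 : b i > a (i + 1) := by subst hik; simpa using hbka
      split_ifs <;> omega
    · split_ifs <;> omega
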